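/- Let n ≥ 5 be prime, g_a = (1, 2, …, n) ∈ A_n, and g_b = g_a conjugated by the transposition (1, 2). Suppose h ∈ A_n fixes the point 1, and there exist integers i, j with g_a^h = g_a^i and g_b^h = g_b^j. Then i = j = 1 and h centralizes both g_a and g_b. -/

import Mathlib

open Fin.NatCast Fin.CommRing

theorem stmt11 (n : ℕ) (hn : 5 ≤ n) (hp : n.Prime)
    (ga : Equiv.Perm (Fin n)) (hga : ga = finRotate n)
    (τ : Equiv.Perm (Fin n))
    (hτ : τ = Equiv.swap (⟨0, by omega⟩ : Fin n) (⟨1, by omega⟩ : Fin n))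
    (gb : Equiv.Perm (Fin n)) (hgb : gb = τ⁻¹ * ga * τ)
    (h : Equiv.Perm (Fin n)) (hmem : h ∈ alternatingGroup (Fin n))
    (hfix : h ⟨0, by omega⟩ = ⟨0, by omega⟩)
    (i j : ℕ) (hi : 0 < i) (hi' : i < n) (hj : 0 < j) (hj' : j < n)
    (hconji : h⁻¹ * ga * h = ga ^ i) (hconjj : h⁻¹ * gb * h = gb ^ j) :
    i = 1 ∧ j = 1 ∧ Commute h ga ∧ Commute h gb := by
  clear hmem
  obtain ⟨m, rfl⟩ : ∃ m, n = m + 5 := ⟨n - 5, by omega⟩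
  have hz : (⟨0, by omega⟩ : Fin (m+5)) = 0 := by ext; simp
  have ho : (⟨1, by omega⟩ : Fin (m+5)) = 1 := by ext; simp
  rw [hz] at hfix
  rw [hz, ho] at hτ
  -- basic cast helpers
  have castVal : ∀ p : ℕ, ((p : Fin (m+5))).val = p % (m+5) := fun p => Fin.val_natCast p (m+5)
  have castEq : ∀ p q : ℕ, p % (m+5) = q % (m+5) → ((p : Fin (m+5)) = (q : Fin (m+5))) := by
    intro p q hpq; apply Fin.ext; rw [castVal, castVal, hpq]
  -- action of ga
  have hga1 : ∀ x : Fin (m+5), ga x = x + 1 := by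
    intro x; rw [hga]; exact finRotate_succ_apply x
  have hgapow : ∀ (k : ℕ) (x : Fin (m+5)), (ga ^ k) x = x + (k : Fin (m+5)) := by
    intro k
    induction k with
    | zero => intro x; simp
    | succ k ih =>
      intro x
      rw [pow_succ, Equiv.Perm.mul_apply, hga1, ih]
      push_cast
      ring
  -- facts about τ
  have hτfix : ∀ x : Fin (m+5), x ≠ 0 → x ≠ 1 → τ x = x := by
    intro x h0 h1; rw [hτ]; exact Equiv.swap_apply_of_ne_of_ne h0 h1
  have hτ0 : τ 0 = 1 := by rw [hτ]; exact Equiv.swap_apply_left 0 1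
  have hτ1 : τ 1 = 0 := by rw [hτ]; exact Equiv.swap_apply_right 0 1
  have hτinv : τ⁻¹ = τ := by rw [hτ]; exact Equiv.swap_inv 0 1
  have hττ : ∀ x : Fin (m+5), τ (τ x) = x := by
    intro x; rw [hτ]; exact Equiv.swap_apply_self 0 1 x
  -- recurrence for h
  have E1 : ∀ x : Fin (m+5), h (x + (i : Fin (m+5))) = h x + 1 := by
    intro x
    have hx := Equiv.Perm.ext_iff.mp hconji x
    simp only [Equiv.Perm.mul_apply] at hx
    rw [hga1, hgapow] at hx
    have h1 := congrArg h hx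
    simp only [Equiv.Perm.coe_inv, Equiv.apply_symm_apply] at h1
    exact h1.symm
  -- recurrence for H := τ ∘ h ∘ τ
  have hgbpow : ∀ k : ℕ, gb ^ k = τ⁻¹ * ga ^ k * τ := by
    intro k
    rw [hgb]
    induction k with
    | zero => simp
    | succ k ih =>
      rw [pow_succ, ih, pow_succ]
      group
  have E2 : ∀ y : Fin (m+5), τ (h (τ (y + (j : Fin (m+5))))) = τ (h (τ y)) + 1 := by
    intro y
    have hx := Equiv.Perm.ext_iff.mp hconjj (τ y)
    rw [hgbpow j, hgb, hτinv] at hx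
    simp only [Equiv.Perm.mul_apply] at hx
    rw [hττ, hgapow, hga1] at hx
    have h1 := congrArg h hx
    simp only [Equiv.Perm.coe_inv, Equiv.apply_symm_apply] at h1
    have h2 := congrArg τ h1
    rw [hττ] at h2
    exact h2.symm
  -- inverses of i and j mod (m+5)
  have hcopi : Nat.Coprime i (m+5) := by
    have : ¬ (m+5) ∣ i := fun hd => by have := Nat.le_of_dvd hi hd; omega
    exact (hp.coprime_iff_not_dvd.mpr this).symm
  have hcopj : Nat.Coprime j (m+5) := by
    have : ¬ (m+5) ∣ j := fun hd => by have := Nat.le_of_dvd hj hd; omega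
    exact (hp.coprime_iff_not_dvd.mpr this).symm
  obtain ⟨a, ha⟩ : ∃ a, i * a % (m+5) = 1 :=
    (Nat.exists_mul_mod_eq_one_of_coprime hcopi (by omega)).imp fun _ h => h.2
  obtain ⟨b, hb⟩ : ∃ b, j * b % (m+5) = 1 :=
    (Nat.exists_mul_mod_eq_one_of_coprime hcopj (by omega)).imp fun _ h => h.2
  have hone : ((i * a : ℕ) : Fin (m+5)) = 1 := by
    have h1 : ((1:ℕ) : Fin (m+5)) = 1 := Nat.cast_one
    rw [← h1]
    exact castEq _ _ (by rw [ha, Nat.mod_eq_of_lt (by omega)])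
  have honeb : ((j * b : ℕ) : Fin (m+5)) = 1 := by
    have h1 : ((1:ℕ) : Fin (m+5)) = 1 := Nat.cast_one
    rw [← h1]
    exact castEq _ _ (by rw [hb, Nat.mod_eq_of_lt (by omega)])
  -- iterate recurrences
  have E1k : ∀ (k : ℕ) (x : Fin (m+5)),
      h (x + ((k * i : ℕ) : Fin (m+5))) = h x + (k : Fin (m+5)) := by
    intro k
    induction k with
    | zero => intro x; simp
    | succ k ih =>
      intro x
      have hc : (((k+1) * i : ℕ) : Fin (m+5)) = ((k*i : ℕ) : Fin (m+5)) + (i : Fin (m+5)) := by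
        push_cast; ring
      rw [hc, ← add_assoc, E1, ih]
      push_cast; ring
  have E2k : ∀ (k : ℕ) (y : Fin (m+5)),
      τ (h (τ (y + ((k * j : ℕ) : Fin (m+5))))) = τ (h (τ y)) + (k : Fin (m+5)) := by
    intro k
    induction k with
    | zero => intro y; simp
    | succ k ih =>
      intro y
      have hc : (((k+1) * j : ℕ) : Fin (m+5)) = ((k*j : ℕ) : Fin (m+5)) + (j : Fin (m+5)) := by
        push_cast; ring
      rw [hc, ← add_assoc, E2, ih]
      push_cast; ring
  have Rh : ∀ x : Fin (m+5), h (x + 1) = h x + (a : Fin (m+5)) := by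
    intro x
    have := E1k a x
    rwa [show ((a * i : ℕ) : Fin (m+5)) = 1 from by rw [Nat.mul_comm]; exact hone] at this
  have RH : ∀ y : Fin (m+5), τ (h (τ (y + 1))) = τ (h (τ y)) + (b : Fin (m+5)) := by
    intro y
    have := E2k b y
    rwa [show ((b * j : ℕ) : Fin (m+5)) = 1 from by rw [Nat.mul_comm]; exact honeb] at this
  -- explicit formulas
  have hform : ∀ k : ℕ, h (k : Fin (m+5)) = ((k * a : ℕ) : Fin (m+5)) := by
    intro k
    induction k with
    | zero => simpa using hfix
    | succ k ih =>
      have hc : ((k+1 : ℕ) : Fin (m+5)) = (k : Fin (m+5)) + 1 := by push_cast; ring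
      rw [hc, Rh, ih]
      push_cast; ring
  have Hform : ∀ k : ℕ,
      τ (h (τ (k : Fin (m+5)))) = τ (h (τ 0)) + ((k * b : ℕ) : Fin (m+5)) := by
    intro k
    induction k with
    | zero => simp
    | succ k ih =>
      have hc : ((k+1 : ℕ) : Fin (m+5)) = (k : Fin (m+5)) + 1 := by push_cast; ring
      rw [hc, RH, ih]
      push_cast; ring
  have H1 : τ (h (τ 1)) = 1 := by rw [hτ1, hfix, hτ0]
  have HB : τ (h (τ 0)) + ((b : ℕ) : Fin (m+5)) = 1 := by
    have h1 := Hform 1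
    rw [Nat.cast_one, one_mul] at h1
    rw [← h1]
    exact H1
  -- main claim for x ∈ {2,3,4}, x ≠ i
  have claim : ∀ x : ℕ, 2 ≤ x → x ≤ 4 → x ≠ i →
      ((x * a : ℕ) : Fin (m+5)) = τ (h (τ 0)) + ((x * b : ℕ) : Fin (m+5)) := by
    intro x hx2 hx4 hxi
    have hxv : ((x : Fin (m+5))).val = x := by rw [castVal]; exact Nat.mod_eq_of_lt (by omega)
    have hx0 : (x : Fin (m+5)) ≠ 0 := by
      intro hc
      have := congrArg Fin.val hc
      rw [hxv, Fin.val_zero] at this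
      omega
    have hx1 : (x : Fin (m+5)) ≠ 1 := by
      intro hc
      have := congrArg Fin.val hc
      rw [hxv, Fin.val_one] at this
      omega
    have hτx : τ (x : Fin (m+5)) = x := hτfix _ hx0 hx1
    have hhx : h (x : Fin (m+5)) = ((x * a : ℕ) : Fin (m+5)) := hform x
    have hxa0 : ((x * a : ℕ) : Fin (m+5)) ≠ 0 := by
      intro hc
      have hcc : h (x : Fin (m+5)) = h 0 := by rw [hhx, hc, hfix]
      exact hx0 (h.injective hcc)
    have hia : h ((i : ℕ) : Fin (m+5)) = 1 := by rw [hform i, hone]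
    have hxa1 : ((x * a : ℕ) : Fin (m+5)) ≠ 1 := by
      intro hc
      have hcc : h (x : Fin (m+5)) = h ((i : ℕ) : Fin (m+5)) := by rw [hhx, hc, hia]
      have h3 := congrArg Fin.val (h.injective hcc)
      rw [hxv, castVal, Nat.mod_eq_of_lt hi'] at h3
      exact hxi h3
    have h4 := Hform x
    rw [hτx, hhx, hτfix _ hxa0 hxa1] at h4
    exact h4
  -- choose two good points
  obtain ⟨x, y, hy2, hxy, hx4, hxi, hyi⟩ :
      ∃ x y : ℕ, 2 ≤ y ∧ y < x ∧ x ≤ 4 ∧ x ≠ i ∧ y ≠ i := by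
    rcases eq_or_ne i 2 with h2 | h2
    · exact ⟨4, 3, by omega, by omega, by omega, by omega, by omega⟩
    rcases eq_or_ne i 3 with h3 | h3
    · exact ⟨4, 2, by omega, by omega, by omega, by omega, by omega⟩
    · exact ⟨3, 2, by omega, by omega, by omega, by omega, by omega⟩
  have eqx := claim x (by omega) hx4 hxi
  have eqy := claim y hy2 (by omega) hyi
  have comb : ((x*a + y*b : ℕ) : Fin (m+5)) = ((y*a + x*b : ℕ) : Fin (m+5)) := by
    push_cast
    push_cast at eqx eqy
    linear_combination eqx - eqy
  have hmod : (x*a + y*b) % (m+5) = (y*a + x*b) % (m+5) := by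
    have := congrArg Fin.val comb
    rwa [castVal, castVal] at this
  have hdvd : ((m+5 : ℕ) : ℤ) ∣ ((x:ℤ) - y) * ((b:ℤ) - a) := by
    have h1 : (x*a + y*b) ≡ (y*a + x*b) [MOD (m+5)] := hmod
    have h2 := (Nat.modEq_iff_dvd).mp h1
    have h3 : ((y*a + x*b : ℕ) : ℤ) - ((x*a + y*b : ℕ) : ℤ)
        = ((x:ℤ) - y) * ((b:ℤ) - a) := by push_cast; ring
    rwa [h3] at h2
  have hnd2 : ¬ ((m+5 : ℕ) : ℤ) ∣ ((x:ℤ) - y) := by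
    intro hd
    have hpos : (0:ℤ) < (x:ℤ) - y := by
      have : (y:ℤ) < (x:ℤ) := by exact_mod_cast hxy
      omega
    have hle := Int.le_of_dvd hpos hd
    have hx4' : (x:ℤ) ≤ 4 := by exact_mod_cast hx4
    have hy2' : (2:ℤ) ≤ (y:ℤ) := by exact_mod_cast hy2
    have hm5 : ((m+5 : ℕ) : ℤ) = (m:ℤ) + 5 := by push_cast; ring
    omega
  have hab : ((m+5 : ℕ) : ℤ) ∣ ((b:ℤ) - (a:ℤ)) :=
    (Int.Prime.dvd_mul' hp hdvd).resolve_left hnd2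
  have habn : a ≡ b [MOD (m+5)] := (Nat.modEq_iff_dvd).mpr hab
  have hxaxb : ((x*a : ℕ) : Fin (m+5)) = ((x*b : ℕ) : Fin (m+5)) :=
    castEq _ _ (habn.mul_left x)
  have hH0 : τ (h (τ 0)) = 0 := by
    rw [hxaxb] at eqx
    exact (add_eq_right.mp eqx.symm)
  have hbone : ((b : ℕ) : Fin (m+5)) = 1 := by rwa [hH0, zero_add] at HB
  have hb1 : b % (m+5) = 1 := by
    have := congrArg Fin.val hbone
    rwa [castVal, Fin.val_one] at this
  have ha1 : a % (m+5) = 1 := by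
    have h1 : a % (m+5) = b % (m+5) := habn
    rw [h1, hb1]
  have hb1' : b ≡ 1 [MOD (m+5)] := by
    show b % (m+5) = 1 % (m+5)
    rw [hb1, Nat.mod_eq_of_lt (by omega)]
  have ha1' : a ≡ 1 [MOD (m+5)] := by
    show a % (m+5) = 1 % (m+5)
    rw [ha1, Nat.mod_eq_of_lt (by omega)]
  have hj1 : j = 1 := by
    have h2 : j * b ≡ j * 1 [MOD (m+5)] := Nat.ModEq.mul_left j hb1'
    have h3 : j * b % (m+5) = j * 1 % (m+5) := h2
    rw [hb, mul_one, Nat.mod_eq_of_lt hj'] at h3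
    omega
  have hi1 : i = 1 := by
    have h2 : i * a ≡ i * 1 [MOD (m+5)] := Nat.ModEq.mul_left i ha1'
    have h3 : i * a % (m+5) = i * 1 % (m+5) := h2
    rw [ha, mul_one, Nat.mod_eq_of_lt hi'] at h3
    omega
  refine ⟨hi1, hj1, ?_, ?_⟩
  · rw [hi1, pow_one] at hconji
    have h2 : h * (h⁻¹ * ga * h) = h * ga := congrArg (h * ·) hconji
    have h3 : ga * h = h * ga := by rw [← h2]; group
    exact h3.symm
  · rw [hj1, pow_one] at hconjj
    have h2 : h * (h⁻¹ * gb * h) = h * gb := congrArg (h * ·) hconjj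
    have h3 : gb * h = h * gb := by rw [← h2]; group
    exact h3.symm
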